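/- Let X be a nonempty compact ultrametric space with a finite similarity structure Sim, and let γ be a homeomorphism of X locally determined by Sim. Then there exists a finite partition {B_1, …, B_n} of X into balls such that for each i, γ(B_i) is a ball, {γ(B_1), …, γ(B_n)} is a partition of X, and the restriction γ|B_i belongs to Sim(B_i, γ(B_i)). Moreover, the partition can be chosen maximal in the sense that whenever B is a ball of X such that γ(B) is a ball and γ|B ∈ Sim(B, γ(B)), then B ⊆ B_i for some i ∈ {1, …, n}. -/

import Mathlib

/-- A ball in a metric space: an open metric ball of positive radius. -/
def IsBall {X : Type*} [MetricSpace X] (B : Set X) : Prop :=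
  ∃ (c : X) (r : ℝ), 0 < r ∧ B = Metric.ball c r

/-- The image in `X` of a subset `A ⊆ X` under a map `h : B₁ → B₂` between
subsets of `X` (only the part of `A` inside `B₁` contributes). -/
def imageOn {X : Type*} {B₁ B₂ : Set X} (h : B₁ → B₂) (A : Set X) : Set X :=
  {y : X | ∃ x : B₁, (x : X) ∈ A ∧ (h x : X) = y}

/-- The restriction of `h : B₁ → B₂` to a subset `B₃ ⊆ B₁`, viewed as a map
from `B₃` onto its image. -/
def restrictMap {X : Type*} {B₁ B₂ : Set X} (h : B₁ → B₂) {B₃ : Set X}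
    (hsub : B₃ ⊆ B₁) : B₃ → (imageOn h B₃ : Set X) :=
  fun x => ⟨(h ⟨x.1, hsub x.2⟩ : X), ⟨⟨x.1, hsub x.2⟩, x.2, rfl⟩⟩

/-- A finite similarity structure on a metric space `X` (Hughes): an assignment
to each ordered pair of balls `B₁, B₂` of a finite set `sim B₁ B₂` of
surjective similarities `B₁ → B₂`, containing the identities and closed under
inverses, compositions and restrictions. -/
structure FinSimStructure (X : Type*) [MetricSpace X] where
  sim : ∀ B₁ B₂ : Set X, Set (B₁ → B₂)
  finite : ∀ B₁ B₂ : Set X, IsBall B₁ → IsBall B₂ → (sim B₁ B₂).Finite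
  isSim : ∀ B₁ B₂ : Set X, IsBall B₁ → IsBall B₂ → ∀ h ∈ sim B₁ B₂,
    Function.Surjective h ∧ ∃ C : ℝ, 0 < C ∧
      ∀ a b : B₁, dist (h a : X) (h b : X) = C * dist (a : X) (b : X)
  id_mem : ∀ B : Set X, IsBall B → (id : B → B) ∈ sim B B
  inv_mem : ∀ B₁ B₂ : Set X, IsBall B₁ → IsBall B₂ → ∀ h ∈ sim B₁ B₂,
    ∀ g : B₂ → B₁, (∀ x, g (h x) = x) → (∀ y, h (g y) = y) → g ∈ sim B₂ B₁
  comp_mem : ∀ B₁ B₂ B₃ : Set X, IsBall B₁ → IsBall B₂ → IsBall B₃ →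
    ∀ h₁ ∈ sim B₁ B₂, ∀ h₂ ∈ sim B₂ B₃, (h₂ ∘ h₁) ∈ sim B₁ B₃
  restrict_mem : ∀ B₁ B₂ : Set X, IsBall B₁ → IsBall B₂ → ∀ h ∈ sim B₁ B₂,
    ∀ B₃ : Set X, IsBall B₃ → ∀ hsub : B₃ ⊆ B₁,
      IsBall (imageOn h B₃) ∧ restrictMap h hsub ∈ sim B₃ (imageOn h B₃)

/-- A homeomorphism `f : X → X` is locally determined by the finite similarity
structure `S` if every point lies in a ball `B` such that `f(B)` is a ball and
the restriction of `f` to `B` belongs to `S.sim B (f(B))`. -/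
def LocallyDetermined {X : Type*} [MetricSpace X] (S : FinSimStructure X)
    (f : X ≃ₜ X) : Prop :=
  ∀ x : X, ∃ B : Set X, IsBall B ∧ x ∈ B ∧ IsBall ((f : X → X) '' B) ∧
    (fun a : B => (⟨f a.1, Set.mem_image_of_mem _ a.2⟩ :
        ((f : X → X) '' B : Set X))) ∈ S.sim B ((f : X → X) '' B)

lemma isBall_nonempty' {X : Type*} [MetricSpace X] {B : Set X} (h : IsBall B) : B.Nonempty := by
  obtain ⟨c, r, hr, rfl⟩ := h
  exact ⟨c, Metric.mem_ball_self hr⟩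

lemma ball_subset_of_inter' {X : Type*} [MetricSpace X]
    (hX : ∀ x y z : X, dist x y ≤ max (dist x z) (dist z y))
    {x y z : X} {r s : ℝ} (hrs : r ≤ s)
    (hz1 : z ∈ Metric.ball x r) (hz2 : z ∈ Metric.ball y s) :
    Metric.ball x r ⊆ Metric.ball y s := by
  intro w hw
  simp only [Metric.mem_ball] at *
  calc dist w y ≤ max (dist w z) (dist z y) := hX w y z
    _ < s := by
        apply max_lt _ hz2
        calc dist w z ≤ max (dist w x) (dist x z) := hX w z x
          _ < s := max_lt (lt_of_lt_of_le hw hrs)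
              (lt_of_lt_of_le (by rwa [dist_comm]) hrs)

lemma ball_comparable' {X : Type*} [MetricSpace X]
    (hX : ∀ x y z : X, dist x y ≤ max (dist x z) (dist z y))
    {A B : Set X} (hA : IsBall A) (hB : IsBall B) (h : (A ∩ B).Nonempty) :
    A ⊆ B ∨ B ⊆ A := by
  obtain ⟨x, r, hr, rfl⟩ := hA
  obtain ⟨y, s, hs, rfl⟩ := hB
  obtain ⟨z, hz1, hz2⟩ := h
  rcases le_total r s with hrs | hrs
  · exact Or.inl (ball_subset_of_inter' hX hrs hz1 hz2)
  · exact Or.inr (ball_subset_of_inter' hX hrs hz2 hz1)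

lemma coarsen' {X : Type*} [MetricSpace X] [Nonempty X]
    (hX : ∀ x y z : X, dist x y ≤ max (dist x z) (dist z y))
    (g : Set X → Prop) (hg : ∀ B, g B → IsBall B) :
    ∀ n (P : Set (Set X)), P.Finite → P.ncard ≤ n → (∀ B ∈ P, g B) →
      P.Pairwise (fun A A' => Disjoint A A') → ⋃₀ P = Set.univ →
      ∃ P' : Set (Set X), P'.Finite ∧ (∀ B ∈ P', g B) ∧
        P'.Pairwise (fun A A' => Disjoint A A') ∧ ⋃₀ P' = Set.univ ∧
        (∀ B, g B → ∃ B' ∈ P', B ⊆ B') := by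
  intro n
  induction n with
  | zero =>
    intro P hfin hcard _ _ hcover
    rw [Nat.le_zero, Set.ncard_eq_zero hfin] at hcard
    subst hcard
    simp only [Set.sUnion_empty] at hcover
    exact absurd hcover.symm (by simp [Set.eq_empty_iff_forall_notMem])
  | succ n ih =>
    intro P hfin hcard hgood hdisj hcover
    by_cases hmax : ∀ B, g B → ∃ B' ∈ P, B ⊆ B'
    · exact ⟨P, hfin, hgood, hdisj, hcover, hmax⟩
    push_neg at hmax
    obtain ⟨B, hgB, hnot⟩ := hmax
    have hBball := hg B hgB
    obtain ⟨x, hxB⟩ := isBall_nonempty' hBball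
    have hxU : x ∈ ⋃₀ P := hcover ▸ Set.mem_univ x
    obtain ⟨B₀, hB₀P, hxB₀⟩ := hxU
    have hB₀B : B₀ ⊆ B := by
      rcases ball_comparable' hX (hg B₀ (hgood B₀ hB₀P)) hBball ⟨x, hxB₀, hxB⟩ with h | h
      · exact h
      · exact absurd h (hnot B₀ hB₀P)
    have hne : B₀ ≠ B := fun h => hnot B₀ hB₀P (h ▸ subset_rfl)
    obtain ⟨y, hyB, hyB₀⟩ := Set.exists_of_ssubset (ssubset_of_subset_of_ne hB₀B hne)
    obtain ⟨A₁, hA₁P, hyA₁⟩ : y ∈ ⋃₀ P := hcover ▸ Set.mem_univ y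
    have hA₁ne : A₁ ≠ B₀ := fun h => hyB₀ (h ▸ hyA₁)
    have key : ∀ A ∈ P, ¬ Disjoint A B → A ⊆ B := by
      intro A hAP hd
      obtain ⟨w, hwA, hwB⟩ := Set.not_disjoint_iff_nonempty_inter.mp hd
      rcases ball_comparable' hX (hg A (hgood A hAP)) hBball ⟨w, hwA, hwB⟩ with h | h
      · exact h
      · exfalso
        by_cases hAB₀ : A = B₀
        · exact hnot B₀ hB₀P (hAB₀ ▸ h)
        · exact Set.disjoint_left.mp (hdisj hAP hB₀P hAB₀) (h (hB₀B hxB₀)) hxB₀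
    set Q : Set (Set X) := {A ∈ P | Disjoint A B} with hQ
    have hQsub : Q ⊆ P := fun A hA => hA.1
    have hQfin : Q.Finite := hfin.subset hQsub
    have hB₀Q : B₀ ∉ Q := fun h =>
      Set.disjoint_left.mp h.2 hxB₀ (hB₀B hxB₀)
    have hA₁Q : A₁ ∉ Q := fun h => Set.disjoint_left.mp h.2 hyA₁ hyB
    have hcard2 : Q.ncard + 2 ≤ P.ncard := by
      have hsub2 : insert B₀ (insert A₁ Q) ⊆ P := by
        intro A hA
        rcases hA with rfl | rfl | hA
        · exact hB₀P
        · exact hA₁P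
        · exact hQsub hA
      have h1 : (insert A₁ Q).ncard = Q.ncard + 1 := Set.ncard_insert_of_notMem hA₁Q hQfin
      have h2 : (insert B₀ (insert A₁ Q)).ncard = Q.ncard + 2 := by
        rw [Set.ncard_insert_of_notMem (by simp [hA₁ne.symm, hB₀Q]) (hQfin.insert A₁), h1]
      rw [← h2]
      exact Set.ncard_le_ncard hsub2 hfin
    set P'' : Set (Set X) := insert B Q with hP''
    have hP''fin : P''.Finite := hQfin.insert B
    have hP''card : P''.ncard ≤ n := by
      have h3 : P''.ncard ≤ Q.ncard + 1 := Set.ncard_insert_le B Q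
      omega
    have hP''good : ∀ A ∈ P'', g A := by
      rintro A (rfl | hA)
      · exact hgB
      · exact hgood A (hQsub hA)
    have hP''disj : P''.Pairwise (fun A A' => Disjoint A A') := by
      rintro A (rfl | hA) A' (rfl | hA') hne'
      · exact absurd rfl hne'
      · exact (hA'.2).symm
      · exact hA.2
      · exact hdisj (hQsub hA) (hQsub hA') hne'
    have hP''cover : ⋃₀ P'' = Set.univ := by
      rw [Set.eq_univ_iff_forall]
      intro w
      obtain ⟨A, hAP, hwA⟩ : w ∈ ⋃₀ P := hcover ▸ Set.mem_univ w
      by_cases hd : Disjoint A B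
      · exact ⟨A, Or.inr ⟨hAP, hd⟩, hwA⟩
      · exact ⟨B, Or.inl rfl, key A hAP hd hwA⟩
    exact ih P'' hP''fin hP''card hP''good hP''disj hP''cover



/-- Every homeomorphism `γ` of a nonempty compact ultrametric space that is
locally determined by a finite similarity structure `S` admits a defining
partition: a finite partition `P` of `X` into balls such that for each
`B ∈ P`, `γ(B)` is a ball, the images form a partition of `X`, and
`γ|B ∈ S.sim B (γ(B))`; moreover `P` can be chosen maximal, in the sense that
any ball `B` with `γ(B)` a ball and `γ|B ∈ S.sim B (γ(B))` is contained in a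
member of `P`. -/
theorem locallyDetermined_defining_partition
    {X : Type*} [MetricSpace X] [CompactSpace X] [Nonempty X]
    (hX : ∀ x y z : X, dist x y ≤ max (dist x z) (dist z y))
    (S : FinSimStructure X) (γ : X ≃ₜ X) (hγ : LocallyDetermined S γ) :
    ∃ P : Set (Set X), P.Finite ∧ (∀ B ∈ P, IsBall B) ∧
      P.Pairwise (fun A A' => Disjoint A A') ∧ ⋃₀ P = Set.univ ∧
      (∀ B ∈ P, IsBall ((γ : X → X) '' B) ∧
        (fun a : B => (⟨γ a.1, Set.mem_image_of_mem _ a.2⟩ :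
            ((γ : X → X) '' B : Set X))) ∈ S.sim B ((γ : X → X) '' B)) ∧
      ((Set.image (γ : X → X)) '' P).Pairwise (fun A A' => Disjoint A A') ∧
      ⋃₀ ((Set.image (γ : X → X)) '' P) = Set.univ ∧
      (∀ B : Set X, IsBall B → IsBall ((γ : X → X) '' B) →
        (fun a : B => (⟨γ a.1, Set.mem_image_of_mem _ a.2⟩ :
            ((γ : X → X) '' B : Set X))) ∈ S.sim B ((γ : X → X) '' B) →
        ∃ B' ∈ P, B ⊆ B') := by
  
  classical
  set g : Set X → Prop := fun B => IsBall B ∧ IsBall ((γ : X → X) '' B) ∧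
      (fun a : B => (⟨γ a.1, Set.mem_image_of_mem _ a.2⟩ :
          ((γ : X → X) '' B : Set X))) ∈ S.sim B ((γ : X → X) '' B) with hgdef
  have hgball : ∀ B, g B → IsBall B := fun B hB => hB.1
  choose U hU1 hU2 hU3 hU4 using hγ
  have hUopen : ∀ x, IsOpen (U x) := by
    intro x
    obtain ⟨c, r, hr, h⟩ := hU1 x
    rw [h]; exact Metric.isOpen_ball
  obtain ⟨t, ht⟩ := isCompact_univ.elim_finite_subcover U hUopen
      (fun x _ => Set.mem_iUnion.mpr ⟨x, hU2 x⟩)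
  set T : Set (Set X) := U '' (t : Set X) with hT
  have hTfin : T.Finite := t.finite_toSet.image U
  have hTgood : ∀ A ∈ T, g A := by
    rintro A ⟨x, _, rfl⟩
    exact ⟨hU1 x, hU3 x, hU4 x⟩
  have hTcover : ∀ w : X, ∃ A ∈ T, w ∈ A := by
    intro w
    have hw := ht (Set.mem_univ w)
    simp only [Set.mem_iUnion, exists_prop] at hw
    obtain ⟨x, hxt, hw⟩ := hw
    exact ⟨U x, ⟨x, hxt, rfl⟩, hw⟩
  -- initial partition: maximal elements of T
  set P₀ : Set (Set X) := {A ∈ T | ∀ A' ∈ T, A ⊆ A' → A = A'} with hP₀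
  have hP₀sub : P₀ ⊆ T := fun A hA => hA.1
  have hP₀fin : P₀.Finite := hTfin.subset hP₀sub
  have hP₀good : ∀ A ∈ P₀, g A := fun A hA => hTgood A (hP₀sub hA)
  have hP₀cover : ⋃₀ P₀ = Set.univ := by
    rw [Set.eq_univ_iff_forall]
    intro w
    obtain ⟨A, hAT, hwA⟩ := hTcover w
    set s' : Set (Set X) := {A' ∈ T | A ⊆ A'} with hs'
    have hs'fin : s'.Finite := hTfin.subset fun A' hA' => hA'.1
    obtain ⟨M, hMs', hMmax⟩ := hs'fin.exists_maximalFor id s' ⟨A, hAT, subset_rfl⟩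
    refine ⟨M, ⟨hMs'.1, ?_⟩, hMs'.2 hwA⟩
    intro A'' hA'' hMA''
    exact subset_antisymm hMA'' (hMmax ⟨hA'', hMs'.2.trans hMA''⟩ hMA'')
  have hP₀disj : P₀.Pairwise (fun A A' => Disjoint A A') := by
    intro A hA A' hA' hne
    by_contra hd
    obtain ⟨w, hw⟩ := Set.not_disjoint_iff_nonempty_inter.mp hd
    rcases ball_comparable' hX (hgball A (hP₀good A hA)) (hgball A' (hP₀good A' hA'))
        ⟨w, hw⟩ with h | h
    · exact hne (hA.2 A' (hP₀sub hA') h)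
    · exact hne (hA'.2 A (hP₀sub hA) h).symm
  obtain ⟨P, hPfin, hPgood, hPdisj, hPcover, hPmax⟩ :=
    coarsen' hX g hgball P₀.ncard P₀ hP₀fin le_rfl hP₀good hP₀disj hP₀cover
  refine ⟨P, hPfin, fun B hB => (hPgood B hB).1, hPdisj, hPcover,
    fun B hB => ⟨(hPgood B hB).2.1, (hPgood B hB).2.2⟩, ?_, ?_,
    fun B h1 h2 h3 => hPmax B ⟨h1, h2, h3⟩⟩
  · rintro C ⟨B, hB, rfl⟩ C' ⟨B', hB', rfl⟩ hne
    have hBB' : B ≠ B' := fun h => hne (by rw [h])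
    have hd : Disjoint B B' := hPdisj hB hB' hBB'
    rw [Set.disjoint_iff_inter_eq_empty] at hd ⊢
    rw [← Set.image_inter γ.injective, hd, Set.image_empty]
  · rw [Set.sUnion_image, ← Set.image_iUnion₂, ← Set.sUnion_eq_biUnion, hPcover,
      Set.image_univ]
    exact γ.surjective.range_eq
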